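/- (Regret of Sleeping CB with the AdaptiveNormal potential) In the Sleeping CB setup, let Z̄_{t,i} = ∑_{s=1}^{t} |z_{s,i}| and define the betting amounts recursively by w_{t,i} = β_{t,i} · (1 + ∑_{s=1}^{t−1} z_{s,i} w_{s,i}) with betting fractions β_{t,i} = 2·σ( 2·(∑_{s=1}^{t−1} z_{s,i}) / (2 + Z̄_{t−1,i}) ) − 1, where σ(x) = 1/(1+e^{−x}) (this corresponds to the AdaptiveNormal potential with ξ = 1). Let W_u = 1 + ∑_{i=1}^N u_i Z̄_{T,i}. Then for every u ∈ Δ^N with π_i > 0 whenever u_i > 0, Regret_T(u) ≤ sqrt( 2 · W_u · ( KL(u‖π) + (1/2)·ln(W_u) ) ). -/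

import Mathlib

open Finset

private lemma log_cosh_le_sq (x : ℝ) : Real.log (Real.cosh x) ≤ x ^ 2 / 2 :=
  (Real.log_le_iff_le_exp (Real.cosh_pos x)).2 (Real.cosh_le_exp_half_sq x)

private lemma one_add_tanh_eq (m : ℝ) : 1 + Real.tanh m = Real.exp m / Real.cosh m := by
  rw [Real.tanh_eq_sinh_div_cosh, ← Real.cosh_add_sinh]
  field_simp

private lemma one_add_tanh_pos (m : ℝ) : 0 < 1 + Real.tanh m := by
  rw [one_add_tanh_eq]; positivity

private lemma log_one_add_tanh (m : ℝ) :
    Real.log (1 + Real.tanh m) = m - Real.log (Real.cosh m) := by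
  rw [one_add_tanh_eq, Real.log_div (Real.exp_ne_zero m) (Real.cosh_pos m).ne',
    Real.log_exp]

private lemma sigmoid_eq_tanh (x : ℝ) :
    2 * (1 / (1 + Real.exp (-(2 * x)))) - 1 = Real.tanh x := by
  have h2 : Real.exp (-(2 * x)) = Real.exp (-x) * Real.exp (-x) := by
    rw [← Real.exp_add]; ring_nf
  have h1 : Real.exp x * Real.exp (-x) = 1 := by
    rw [← Real.exp_add]; simp
  have hp : (0:ℝ) < Real.exp x := Real.exp_pos x
  have hq : (0:ℝ) < Real.exp (-x) := Real.exp_pos (-x)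
  have hden : (0:ℝ) < 1 + Real.exp (-x) * Real.exp (-x) := by positivity
  rw [Real.tanh_eq_sinh_div_cosh, Real.sinh_eq, Real.cosh_eq, h2]
  rw [div_div_div_eq]
  field_simp
  nlinarith [h1, hq]

private lemma chord_quad (S c z : ℝ) (hc : 1 ≤ c) (h0 : 0 ≤ z) (h1 : z ≤ 1) :
    (S + z) ^ 2 / (2 * (c + z)) ≤
      (1 - z) * (S ^ 2 / (2 * c)) + z * ((S + 1) ^ 2 / (2 * (c + 1))) := by
  have hc0 : (0:ℝ) < c := by linarith
  have hcz : (0:ℝ) < c + z := by linarith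
  have hc1 : (0:ℝ) < c + 1 := by linarith
  have key : (1 - z) * (S ^ 2 / (2 * c)) + z * ((S + 1) ^ 2 / (2 * (c + 1)))
      - (S + z) ^ 2 / (2 * (c + z))
      = z * (1 - z) * (S - c) ^ 2 / (2 * c * (c + 1) * (c + z)) := by
    field_simp
    ring
  have hnn : 0 ≤ z * (1 - z) * (S - c) ^ 2 / (2 * c * (c + 1) * (c + z)) := by
    apply div_nonneg
    · exact mul_nonneg (mul_nonneg h0 (by linarith)) (sq_nonneg _)
    · positivity
  linarith [key ▸ hnn]

private lemma log_chord (c z : ℝ) (hc : 1 ≤ c) (h0 : 0 ≤ z) (h1 : z ≤ 1) :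
    (1 - z) * Real.log c + z * Real.log (c + 1) ≤ Real.log (c + z) := by
  have hc0 : (0:ℝ) < c := by linarith
  have hc1 : (0:ℝ) < c + 1 := by linarith
  have amgm := Real.geom_mean_le_arith_mean2_weighted (by linarith : (0:ℝ) ≤ 1 - z) h0
    hc0.le hc1.le (by ring)
  have hpos : (0:ℝ) < c ^ (1 - z) * (c + 1) ^ z := by positivity
  calc (1 - z) * Real.log c + z * Real.log (c + 1)
      = Real.log (c ^ (1 - z) * (c + 1) ^ z) := by
        rw [Real.log_mul (by positivity) (by positivity), Real.log_rpow hc0,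
          Real.log_rpow hc1]
    _ ≤ Real.log (c + z) := Real.log_le_log hpos (by linarith [amgm])

private lemma bernoulli_log (β z : ℝ) (hβ : 0 < 1 + β) (h0 : 0 ≤ z) (h1 : z ≤ 1) :
    0 < 1 + z * β ∧ z * Real.log (1 + β) ≤ Real.log (1 + z * β) := by
  have amgm := Real.geom_mean_le_arith_mean2_weighted (by linarith : (0:ℝ) ≤ 1 - z) h0
    (by norm_num : (0:ℝ) ≤ 1) hβ.le (by ring)
  -- amgm : 1 ^ (1-z) * (1+β) ^ z ≤ (1-z) * 1 + z * (1+β)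
  rw [Real.one_rpow, one_mul] at amgm
  have hrp : (0:ℝ) < (1 + β) ^ z := Real.rpow_pos_of_pos hβ z
  have hpos : 0 < 1 + z * β := lt_of_lt_of_le hrp (by linarith [amgm])
  refine ⟨hpos, ?_⟩
  calc z * Real.log (1 + β) = Real.log ((1 + β) ^ z) := (Real.log_rpow hβ z).symm
    _ ≤ Real.log (1 + z * β) := Real.log_le_log hrp (by linarith [amgm])

private lemma endpoint_ineq (S c : ℝ) (hc : 1 ≤ c) :
    (S + 1) ^ 2 / (2 * (c + 1)) - S ^ 2 / (2 * c) - (Real.log (c + 1) - Real.log c) / 2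
      ≤ Real.log (1 + Real.tanh (S / (c + 1))) := by
  have hc0 : (0:ℝ) < c := by linarith
  have hc1 : (0:ℝ) < c + 1 := by linarith
  rw [log_one_add_tanh]
  have h1 : Real.log (Real.cosh (S / (c + 1))) ≤ (S / (c + 1)) ^ 2 / 2 :=
    log_cosh_le_sq _
  have h2 : Real.log (c / (c + 1)) ≤ c / (c + 1) - 1 :=
    Real.log_le_sub_one_of_pos (by positivity)
  have h3 : Real.log (c / (c + 1)) = Real.log c - Real.log (c + 1) :=
    Real.log_div hc0.ne' hc1.ne'
  -- so Real.log (c+1) - Real.log c ≥ 1 - c/(c+1) = 1/(c+1)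
  have h4 : 1 / (c + 1) ≤ Real.log (c + 1) - Real.log c := by
    rw [h3] at h2
    have : c / (c + 1) - 1 = -(1 / (c + 1)) := by field_simp; ring
    linarith [h2, this ▸ h2]
  have key : (S + 1) ^ 2 / (2 * (c + 1)) - S ^ 2 / (2 * c) - (1 / (c + 1)) / 2
      - (S / (c + 1) - (S / (c + 1)) ^ 2 / 2) = - (S ^ 2 / (2 * c * (c + 1) ^ 2)) := by
    field_simp
    ring
  have hfin : -(S ^ 2 / (2 * c * (c + 1) ^ 2)) ≤ 0 := neg_nonpos.2 (by positivity)
  linarith [key ▸ hfin]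

private lemma step_nonneg (S c z : ℝ) (hc : 1 ≤ c) (h0 : 0 ≤ z) (h1 : z ≤ 1) :
    Real.exp ((S + z) ^ 2 / (2 * (c + z)) - Real.log (c + z) / 2)
      ≤ (1 + z * Real.tanh (S / (c + 1))) *
        Real.exp (S ^ 2 / (2 * c) - Real.log c / 2) := by
  set β := Real.tanh (S / (c + 1)) with hβdef
  have hβ : 0 < 1 + β := one_add_tanh_pos _
  obtain ⟨hpos, hbern⟩ := bernoulli_log β z hβ h0 h1
  have hchord := chord_quad S c z hc h0 h1
  have hlogch := log_chord c z hc h0 h1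
  have hend := endpoint_ineq S c hc
  have hchain : (S + z) ^ 2 / (2 * (c + z)) - Real.log (c + z) / 2
      ≤ S ^ 2 / (2 * c) - Real.log c / 2 + Real.log (1 + z * β) := by
    have hmul : z * ((S + 1) ^ 2 / (2 * (c + 1)) - S ^ 2 / (2 * c)
        - (Real.log (c + 1) - Real.log c) / 2) ≤ z * Real.log (1 + β) :=
      mul_le_mul_of_nonneg_left hend h0
    nlinarith [hchord, hlogch, hmul, hbern]
  calc Real.exp ((S + z) ^ 2 / (2 * (c + z)) - Real.log (c + z) / 2)
      ≤ Real.exp (S ^ 2 / (2 * c) - Real.log c / 2 + Real.log (1 + z * β)) :=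
        Real.exp_le_exp.2 hchain
    _ = (1 + z * β) * Real.exp (S ^ 2 / (2 * c) - Real.log c / 2) := by
        rw [Real.exp_add, Real.exp_log hpos]; ring

private lemma step_all (S c z : ℝ) (hc : 1 ≤ c) (hz : |z| ≤ 1) :
    Real.exp ((S + z) ^ 2 / (2 * (c + |z|)) - Real.log (c + |z|) / 2)
      ≤ (1 + z * Real.tanh (S / (c + 1))) *
        Real.exp (S ^ 2 / (2 * c) - Real.log c / 2) := by
  rcases le_or_gt 0 z with hz0 | hz0
  · rw [abs_of_nonneg hz0]
    exact step_nonneg S c z hc hz0 (by rwa [abs_of_nonneg hz0] at hz)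
  · rw [abs_of_neg hz0]
    have h := step_nonneg (-S) c (-z) hc (by linarith) (by rwa [abs_of_neg hz0] at hz)
    have e1 : (-S + -z) ^ 2 = (S + z) ^ 2 := by ring
    have e2 : (-S) ^ 2 = S ^ 2 := by ring
    have e3 : Real.tanh (-S / (c + 1)) = -Real.tanh (S / (c + 1)) := by
      rw [neg_div, Real.tanh_neg]
    rw [e1, e2, e3] at h
    convert h using 3
    ring

private lemma wealth_lb (z w : ℕ → ℝ) (hz : ∀ s, |z s| ≤ 1)
    (hw : ∀ t, 1 ≤ t → w t =
      Real.tanh ((∑ s ∈ Finset.Icc 1 (t - 1), z s) /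
          (2 + ∑ s ∈ Finset.Icc 1 (t - 1), |z s|)) *
        (1 + ∑ s ∈ Finset.Icc 1 (t - 1), z s * w s)) :
    ∀ t, Real.exp ((∑ s ∈ Finset.Icc 1 t, z s) ^ 2 /
          (2 * (1 + ∑ s ∈ Finset.Icc 1 t, |z s|)) -
        Real.log (1 + ∑ s ∈ Finset.Icc 1 t, |z s|) / 2)
      ≤ 1 + ∑ s ∈ Finset.Icc 1 t, z s * w s := by
  intro t
  induction t with
  | zero => simp
  | succ t ih =>
    have hsplit : ∀ f : ℕ → ℝ, (∑ s ∈ Finset.Icc 1 (t + 1), f s)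
        = (∑ s ∈ Finset.Icc 1 t, f s) + f (t + 1) :=
      fun f => Finset.sum_Icc_succ_top (Nat.succ_le_succ (Nat.zero_le t)) f
    set S := ∑ s ∈ Finset.Icc 1 t, z s with hS
    set V := ∑ s ∈ Finset.Icc 1 t, |z s| with hV
    set Wl := 1 + ∑ s ∈ Finset.Icc 1 t, z s * w s with hWl
    have hV0 : 0 ≤ V := Finset.sum_nonneg fun s _ => abs_nonneg _
    have hc : (1:ℝ) ≤ 1 + V := by linarith
    have hwt : w (t + 1) = Real.tanh (S / (2 + V)) * Wl := by
      have := hw (t + 1) (Nat.succ_le_succ (Nat.zero_le t))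
      simpa using this
    have hstep := step_all S (1 + V) (z (t + 1)) hc (hz (t + 1))
    have hc1 : (1 + V) + 1 = 2 + V := by ring
    rw [hc1] at hstep
    have hpos : 0 < 1 + z (t + 1) * Real.tanh (S / (2 + V)) := by
      nlinarith [lt_of_lt_of_le (Real.exp_pos _) hstep,
        Real.exp_pos (S ^ 2 / (2 * (1 + V)) - Real.log (1 + V) / 2)]
    have hWlge : Real.exp (S ^ 2 / (2 * (1 + V)) - Real.log (1 + V) / 2) ≤ Wl := ih
    calc Real.exp ((∑ s ∈ Finset.Icc 1 (t + 1), z s) ^ 2 /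
          (2 * (1 + ∑ s ∈ Finset.Icc 1 (t + 1), |z s|)) -
        Real.log (1 + ∑ s ∈ Finset.Icc 1 (t + 1), |z s|) / 2)
        = Real.exp ((S + z (t + 1)) ^ 2 / (2 * ((1 + V) + |z (t + 1)|)) -
            Real.log ((1 + V) + |z (t + 1)|) / 2) := by
          rw [hsplit z, hsplit (fun s => |z s|), ← hS, ← hV]
          ring_nf
      _ ≤ (1 + z (t + 1) * Real.tanh (S / (2 + V))) *
            Real.exp (S ^ 2 / (2 * (1 + V)) - Real.log (1 + V) / 2) := hstep
      _ ≤ (1 + z (t + 1) * Real.tanh (S / (2 + V))) * Wl :=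
          mul_le_mul_of_nonneg_left hWlge hpos.le
      _ = 1 + ∑ s ∈ Finset.Icc 1 (t + 1), z s * w s := by
          rw [hsplit (fun s => z s * w s), hwt, hWl]
          ring

private lemma weighted_log_le {ι : Type*} (s : Finset ι) (u x : ι → ℝ)
    (hu : ∀ i ∈ s, 0 ≤ u i) (hu1 : ∑ i ∈ s, u i = 1) (hx : ∀ i ∈ s, 0 < x i) :
    ∑ i ∈ s, u i * Real.log (x i) ≤ Real.log (∑ i ∈ s, u i * x i) := by
  have amgm := Real.geom_mean_le_arith_mean_weighted s u x hu hu1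
    (fun i hi => (hx i hi).le)
  have hprod : 0 < ∏ i ∈ s, x i ^ u i :=
    Finset.prod_pos fun i hi => Real.rpow_pos_of_pos (hx i hi) _
  calc ∑ i ∈ s, u i * Real.log (x i) = Real.log (∏ i ∈ s, x i ^ u i) := by
        rw [Real.log_prod (fun i hi => (Real.rpow_pos_of_pos (hx i hi) _).ne')]
        exact Finset.sum_congr rfl fun i hi => (Real.log_rpow (hx i hi) _).symm
    _ ≤ Real.log (∑ i ∈ s, u i * x i) := Real.log_le_log hprod amgm

private lemma final_combine {N : ℕ} (u πv S Zb Wl : Fin N → ℝ)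
    (hu0 : ∀ i, 0 ≤ u i) (hu1 : ∑ i, u i = 1)
    (hsupp : ∀ i, 0 < u i → 0 < πv i) (hπ0 : ∀ i, 0 ≤ πv i)
    (hZ : ∀ i, 0 ≤ Zb i)
    (hWl : ∀ i, Real.exp (S i ^ 2 / (2 * (1 + Zb i)) - Real.log (1 + Zb i) / 2) ≤ Wl i)
    (htotal : ∑ i, πv i * Wl i ≤ 1) :
    ∑ i, u i * S i ≤ Real.sqrt (2 * (1 + ∑ i, u i * Zb i) *
      ((∑ i, u i * Real.log (u i / πv i)) +
        (1 / 2) * Real.log (1 + ∑ i, u i * Zb i))) := by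
  classical
  set s : Finset (Fin N) := Finset.univ.filter (fun i => 0 < u i) with hsdef
  have hmem : ∀ i ∈ s, 0 < u i := fun i hi => (Finset.mem_filter.1 hi).2
  have hzero' : ∀ i ∈ (Finset.univ : Finset (Fin N)), i ∉ s → u i = 0 := by
    intro i _ hi
    have hnot : ¬ 0 < u i := fun hpos => hi (Finset.mem_filter.2 ⟨Finset.mem_univ i, hpos⟩)
    rcases eq_or_lt_of_le (hu0 i) with he | hlt
    · exact he.symm
    · exact absurd hlt hnot
  have hus : ∑ i ∈ s, u i = 1 := by
    rw [← hu1]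
    exact Finset.sum_subset (Finset.filter_subset _ _) hzero'
  set L : Fin N → ℝ := fun i => 1 + Zb i with hLdef
  have hL1 : ∀ i, (1:ℝ) ≤ L i := fun i => by simp only [hLdef]; linarith [hZ i]
  have hLpos : ∀ i, (0:ℝ) < L i := fun i => lt_of_lt_of_le one_pos (hL1 i)
  have hWlpos : ∀ i, 0 < Wl i := fun i => lt_of_lt_of_le (Real.exp_pos _) (hWl i)
  have hlogWl : ∀ i, S i ^ 2 / (2 * L i) - Real.log (L i) / 2 ≤ Real.log (Wl i) := by
    intro i
    have := Real.log_le_log (Real.exp_pos _) (hWl i)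
    rwa [Real.log_exp] at this
  set K := ∑ i, u i * Real.log (u i / πv i) with hKdef
  set W := 1 + ∑ i, u i * Zb i with hWdef
  -- Gibbs' inequality
  have hx : ∀ i ∈ s, 0 < πv i * Wl i / u i := fun i hi =>
    div_pos (mul_pos (hsupp i (hmem i hi)) (hWlpos i)) (hmem i hi)
  have j1 := weighted_log_le s u (fun i => πv i * Wl i / u i)
    (fun i hi => (hmem i hi).le) hus hx
  have hsum_eq : ∑ i ∈ s, u i * (πv i * Wl i / u i) = ∑ i ∈ s, πv i * Wl i :=
    Finset.sum_congr rfl fun i hi => by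
      rw [mul_comm, div_mul_cancel₀ _ (hmem i hi).ne']
  have hle1 : ∑ i ∈ s, πv i * Wl i ≤ 1 :=
    le_trans (Finset.sum_le_sum_of_subset_of_nonneg (Finset.filter_subset _ _)
      (fun i _ _ => mul_nonneg (hπ0 i) (hWlpos i).le)) htotal
  have j1' : ∑ i ∈ s, u i * Real.log (πv i * Wl i / u i) ≤ 0 := by
    refine le_trans j1 ?_
    rw [hsum_eq]
    exact Real.log_nonpos
      (Finset.sum_nonneg fun i _ => mul_nonneg (hπ0 i) (hWlpos i).le) hle1
  have hexp : ∀ i ∈ s, Real.log (πv i * Wl i / u i)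
      = Real.log (Wl i) - Real.log (u i / πv i) := by
    intro i hi
    have hπp := hsupp i (hmem i hi)
    have hup := hmem i hi
    rw [Real.log_div (mul_pos hπp (hWlpos i)).ne' hup.ne',
      Real.log_mul hπp.ne' (hWlpos i).ne', Real.log_div hup.ne' hπp.ne']
    ring
  have gibbs : ∑ i ∈ s, u i * Real.log (Wl i) ≤ ∑ i ∈ s, u i * Real.log (u i / πv i) := by
    have e : ∑ i ∈ s, u i * Real.log (πv i * Wl i / u i)
        = ∑ i ∈ s, (u i * Real.log (Wl i) - u i * Real.log (u i / πv i)) :=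
      Finset.sum_congr rfl fun i hi => by rw [hexp i hi]; ring
    rw [e, Finset.sum_sub_distrib] at j1'
    linarith
  have hKLeq : ∑ i ∈ s, u i * Real.log (u i / πv i) = K := by
    rw [hKdef]
    exact Finset.sum_subset (Finset.filter_subset _ _)
      (fun i hi hni => by rw [hzero' i hi hni]; ring)
  have key1 : ∑ i ∈ s, u i * (S i ^ 2 / (2 * L i) - Real.log (L i) / 2) ≤ K :=
    le_trans (Finset.sum_le_sum fun i hi =>
      mul_le_mul_of_nonneg_left (hlogWl i) (hmem i hi).le) (le_of_le_of_eq gibbs hKLeq)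
  -- Jensen for the log term
  have j2 := weighted_log_le s u L (fun i hi => (hmem i hi).le) hus
    (fun i _ => hLpos i)
  have hBeq : ∑ i ∈ s, u i * L i = 1 + ∑ i ∈ s, u i * Zb i := by
    rw [← hus, ← Finset.sum_add_distrib]
    exact Finset.sum_congr rfl fun i _ => by simp only [hLdef]; ring
  have hBW : ∑ i ∈ s, u i * L i ≤ W := by
    rw [hBeq, hWdef]
    have : ∑ i ∈ s, u i * Zb i ≤ ∑ i, u i * Zb i :=
      Finset.sum_le_sum_of_subset_of_nonneg (Finset.filter_subset _ _)
        (fun i _ _ => mul_nonneg (hu0 i) (hZ i))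
    linarith
  have hBpos : 0 < ∑ i ∈ s, u i * L i := by
    rw [hBeq]
    have : 0 ≤ ∑ i ∈ s, u i * Zb i :=
      Finset.sum_nonneg fun i hi => mul_nonneg (hmem i hi).le (hZ i)
    linarith
  have hlogW : ∑ i ∈ s, u i * Real.log (L i) ≤ Real.log W :=
    le_trans j2 (Real.log_le_log hBpos hBW)
  -- combine into a bound on the normalized second moment
  have key2 : ∑ i ∈ s, u i * (S i ^ 2 / L i) ≤ 2 * K + Real.log W := by
    have e : ∑ i ∈ s, u i * (S i ^ 2 / L i)
        = 2 * ∑ i ∈ s, (u i * (S i ^ 2 / (2 * L i) - Real.log (L i) / 2)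
            + u i * Real.log (L i) / 2) := by
      rw [Finset.mul_sum]
      refine Finset.sum_congr rfl fun i _ => ?_
      have hne : (1 + Zb i) ≠ 0 := ne_of_gt (by linarith [hZ i])
      simp only [hLdef]
      field_simp
      ring
    rw [e, Finset.sum_add_distrib]
    have e2 : ∑ i ∈ s, u i * Real.log (L i) / 2
        = (∑ i ∈ s, u i * Real.log (L i)) / 2 := by
      rw [← Finset.sum_div]
    rw [e2]
    linarith [key1, hlogW]
  -- Cauchy–Schwarz
  have cs := Finset.sum_mul_sq_le_sq_mul_sq s
    (fun i => Real.sqrt (u i / L i) * S i) (fun i => Real.sqrt (u i * L i))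
  have hfg : ∀ i ∈ s, (Real.sqrt (u i / L i) * S i) * Real.sqrt (u i * L i)
      = u i * S i := by
    intro i hi
    have key : Real.sqrt (u i / L i) * Real.sqrt (u i * L i) = u i := by
      rw [← Real.sqrt_mul (div_nonneg (hu0 i) (hLpos i).le)]
      have e : u i / L i * (u i * L i) = u i ^ 2 := by
        have hne : (1 + Zb i) ≠ 0 := ne_of_gt (by linarith [hZ i])
        simp only [hLdef]
        field_simp
      rw [e, Real.sqrt_sq (hu0 i)]
    calc (Real.sqrt (u i / L i) * S i) * Real.sqrt (u i * L i)
        = (Real.sqrt (u i / L i) * Real.sqrt (u i * L i)) * S i := by ring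
      _ = u i * S i := by rw [key]
  have hf2 : ∀ i, (Real.sqrt (u i / L i) * S i) ^ 2 = u i * (S i ^ 2 / L i) := by
    intro i
    rw [mul_pow, Real.sq_sqrt (div_nonneg (hu0 i) (hLpos i).le)]
    ring
  have hg2 : ∀ i, (Real.sqrt (u i * L i)) ^ 2 = u i * L i := fun i =>
    Real.sq_sqrt (mul_nonneg (hu0 i) (hLpos i).le)
  have cs' : (∑ i ∈ s, u i * S i) ^ 2
      ≤ (∑ i ∈ s, u i * (S i ^ 2 / L i)) * ∑ i ∈ s, u i * L i := by
    have e1 : ∑ i ∈ s, (Real.sqrt (u i / L i) * S i) * Real.sqrt (u i * L i)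
        = ∑ i ∈ s, u i * S i := Finset.sum_congr rfl hfg
    have e2 : ∑ i ∈ s, (Real.sqrt (u i / L i) * S i) ^ 2
        = ∑ i ∈ s, u i * (S i ^ 2 / L i) := Finset.sum_congr rfl fun i _ => hf2 i
    have e3 : ∑ i ∈ s, (Real.sqrt (u i * L i)) ^ 2
        = ∑ i ∈ s, u i * L i := Finset.sum_congr rfl fun i _ => hg2 i
    rw [e1, e2, e3] at cs
    exact cs
  have hPnn : 0 ≤ ∑ i ∈ s, u i * (S i ^ 2 / L i) :=
    Finset.sum_nonneg fun i hi =>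
      mul_nonneg (hmem i hi).le (div_nonneg (sq_nonneg _) (hLpos i).le)
  have h2K : 0 ≤ 2 * K + Real.log W := le_trans hPnn key2
  have final_sq : (∑ i ∈ s, u i * S i) ^ 2 ≤ 2 * W * (K + 1 / 2 * Real.log W) := by
    calc (∑ i ∈ s, u i * S i) ^ 2
        ≤ (∑ i ∈ s, u i * (S i ^ 2 / L i)) * ∑ i ∈ s, u i * L i := cs'
      _ ≤ (2 * K + Real.log W) * W := mul_le_mul key2 hBW hBpos.le h2K
      _ = 2 * W * (K + 1 / 2 * Real.log W) := by ring
  have hsum_eq2 : ∑ i, u i * S i = ∑ i ∈ s, u i * S i :=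
    (Finset.sum_subset (Finset.filter_subset _ _)
      (fun i hi hni => by rw [hzero' i hi hni]; ring)).symm
  calc ∑ i, u i * S i = ∑ i ∈ s, u i * S i := hsum_eq2
    _ ≤ |∑ i ∈ s, u i * S i| := le_abs_self _
    _ = Real.sqrt ((∑ i ∈ s, u i * S i) ^ 2) := (Real.sqrt_sq_eq_abs _).symm
    _ ≤ Real.sqrt (2 * W * (K + 1 / 2 * Real.log W)) := Real.sqrt_le_sqrt final_sq

theorem sleeping_cb_an_regret
    (N T : ℕ) (hT : 1 ≤ T)
    (π u : Fin N → ℝ)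
    (hπ0 : ∀ i, 0 ≤ π i) (hπ1 : ∑ i, π i = 1)
    (hu0 : ∀ i, 0 ≤ u i) (hu1 : ∑ i, u i = 1)
    (hsupp : ∀ i, 0 < u i → 0 < π i)
    (ℓ Ind w p g z Zbar : ℕ → Fin N → ℝ) (h : ℕ → ℝ)
    (hℓ : ∀ t i, ℓ t i ∈ Set.Icc (0:ℝ) 1)
    (hInd : ∀ t i, Ind t i = 0 ∨ Ind t i = 1)
    (hawake : ∀ t, 1 ≤ t → t ≤ T → ∃ i, Ind t i = 1 ∧ 0 < π i)
    (hZbar : ∀ t i, Zbar t i = ∑ s ∈ Finset.Icc 1 t, |z s i|)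
    (hw : ∀ t i, w t i =
      (2 * (1 / (1 + Real.exp
          (-(2 * (∑ s ∈ Finset.Icc 1 (t - 1), z s i) / (2 + Zbar (t - 1) i))))) - 1) *
        (1 + ∑ s ∈ Finset.Icc 1 (t - 1), z s i * w s i))
    (hp : ∀ t i, p t i =
      if 0 < ∑ j, π j * Ind t j * max (w t j) 0
      then (π i * Ind t i * max (w t i) 0) / ∑ j, π j * Ind t j * max (w t j) 0
      else (π i * Ind t i) / ∑ j, π j * Ind t j)
    (hh : ∀ t, h t = ∑ i, Ind t i * p t i * ℓ t i)
    (hg : ∀ t i, g t i = if 0 < w t i then h t - ℓ t i else max (h t - ℓ t i) 0)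
    (hz : ∀ t i, z t i = Ind t i * g t i) :
    ∑ t ∈ Finset.Icc 1 T, ∑ i, Ind t i * u i * (h t - ℓ t i)
      ≤ Real.sqrt (2 * (1 + ∑ i, u i * Zbar T i) *
          ((∑ i, u i * Real.log (u i / π i)) +
            (1 / 2) * Real.log (1 + ∑ i, u i * Zbar T i))) := by
  have hInd0 : ∀ t i, 0 ≤ Ind t i := by
    intro t i; rcases hInd t i with h' | h' <;> rw [h'] <;> norm_num
  have hInd1 : ∀ t i, Ind t i ≤ 1 := by
    intro t i; rcases hInd t i with h' | h' <;> rw [h'] <;> norm_num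
  -- p is nonnegative
  have hp0 : ∀ t i, 0 ≤ p t i := by
    intro t i
    rw [hp]
    split_ifs with hD
    · exact div_nonneg (mul_nonneg (mul_nonneg (hπ0 i) (hInd0 t i)) (le_max_right _ _)) hD.le
    · exact div_nonneg (mul_nonneg (hπ0 i) (hInd0 t i))
        (Finset.sum_nonneg fun j _ => mul_nonneg (hπ0 j) (hInd0 t j))
  -- Ind * p = p
  have hpInd : ∀ t i, Ind t i * p t i = p t i := by
    intro t i
    rcases hInd t i with h' | h'
    · have hp0' : p t i = 0 := by
        rw [hp, h']
        split_ifs <;> simp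
      rw [hp0', h']; ring
    · rw [h', one_mul]
  -- sum of p is at most 1
  have hpsum : ∀ t, ∑ i, p t i ≤ 1 := by
    intro t
    by_cases hD : 0 < ∑ j, π j * Ind t j * max (w t j) 0
    · have : ∑ i, p t i = 1 := by
        simp only [hp, if_pos hD]
        rw [← Finset.sum_div, div_self hD.ne']
      linarith
    · simp only [hp, if_neg hD]
      rw [← Finset.sum_div]
      rcases eq_or_lt_of_le (Finset.sum_nonneg fun j (_ : j ∈ Finset.univ) =>
          mul_nonneg (hπ0 j) (hInd0 t j)) with hD' | hD'
      · rw [← hD', div_zero]; norm_num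
      · rw [div_self hD'.ne']
  -- p sums to exactly 1 in the positive branch
  have hpsum1 : ∀ t, (0 < ∑ j, π j * Ind t j * max (w t j) 0) → ∑ i, p t i = 1 := by
    intro t hD
    simp only [hp, if_pos hD]
    rw [← Finset.sum_div, div_self hD.ne']
  -- h is in [0,1]
  have hh0 : ∀ t, 0 ≤ h t := by
    intro t
    rw [hh]
    exact Finset.sum_nonneg fun i _ =>
      mul_nonneg (mul_nonneg (hInd0 t i) (hp0 t i)) (hℓ t i).1
  have hh1 : ∀ t, h t ≤ 1 := by
    intro t
    rw [hh]
    calc ∑ i, Ind t i * p t i * ℓ t i ≤ ∑ i, p t i := by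
          refine Finset.sum_le_sum fun i _ => ?_
          rw [hpInd t i]
          calc p t i * ℓ t i ≤ p t i * 1 :=
                mul_le_mul_of_nonneg_left (hℓ t i).2 (hp0 t i)
            _ = p t i := mul_one _
      _ ≤ 1 := hpsum t
  -- h = ∑ p ℓ  (with the Ind stripped)
  have hhp : ∀ t, h t = ∑ i, p t i * ℓ t i := by
    intro t
    rw [hh]
    exact Finset.sum_congr rfl fun i _ => by rw [hpInd t i]
  -- |z| ≤ 1
  have habs : ∀ t i, |z t i| ≤ 1 := by
    intro t i
    rw [hz]
    have hg1 : |g t i| ≤ 1 := by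
      rw [hg]
      have hha := hh0 t; have hhb := hh1 t
      have hl1 := (hℓ t i).1; have hl2 := (hℓ t i).2
      split_ifs
      · rw [abs_le]; constructor <;> linarith
      · rw [abs_of_nonneg (le_max_right _ _)]
        exact max_le (by linarith) (by norm_num)
    rcases hInd t i with h' | h' <;> rw [h']
    · simp
    · simpa using hg1
  -- per-round: the prior-weighted bet outcome is nonpositive
  have roundB : ∀ t, (∑ i, π i * (z t i * w t i)) ≤ 0 := by
    intro t
    by_cases hD : 0 < ∑ j, π j * Ind t j * max (w t j) 0
    · have hterm : ∀ i, π i * (z t i * w t i)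
          ≤ π i * Ind t i * max (w t i) 0 * (h t - ℓ t i) := by
        intro i
        rw [hz, hg]
        by_cases hwi : 0 < w t i
        · rw [if_pos hwi, max_eq_left hwi.le]
          exact le_of_eq (by ring)
        · rw [if_neg hwi, max_eq_right (le_of_not_gt hwi)]
          have e : π i * (Ind t i * max (h t - ℓ t i) 0 * w t i)
              = (π i * Ind t i * max (h t - ℓ t i) 0) * w t i := by ring
          rw [e]
          calc (π i * Ind t i * max (h t - ℓ t i) 0) * w t i ≤ 0 :=
                mul_nonpos_of_nonneg_of_nonpos
                  (mul_nonneg (mul_nonneg (hπ0 i) (hInd0 t i)) (le_max_right _ _))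
                  (le_of_not_gt hwi)
            _ = π i * Ind t i * 0 * (h t - ℓ t i) := by ring
      obtain ⟨D, hDdef⟩ : ∃ D, D = ∑ j, π j * Ind t j * max (w t j) 0 := ⟨_, rfl⟩
      rw [← hDdef] at hD
      have hpD : ∀ i, p t i * D = π i * Ind t i * max (w t i) 0 := by
        intro i
        rw [hp, ← hDdef, if_pos hD]
        exact div_mul_cancel₀ _ hD.ne'
      calc ∑ i, π i * (z t i * w t i)
          ≤ ∑ i, π i * Ind t i * max (w t i) 0 * (h t - ℓ t i) :=
            Finset.sum_le_sum fun i _ => hterm i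
        _ = ∑ i, p t i * D * (h t - ℓ t i) :=
            Finset.sum_congr rfl fun i _ => by rw [hpD i]
        _ = D * ((∑ i, p t i) * h t - ∑ i, p t i * ℓ t i) := by
            simp only [mul_sub, Finset.mul_sum, Finset.sum_mul]
            rw [← Finset.sum_sub_distrib]
            exact Finset.sum_congr rfl fun i _ => by ring
        _ = 0 := by
            rw [hpsum1 t (by rwa [← hDdef]), ← hhp t]
            ring
    · have hDnn : 0 ≤ ∑ j, π j * Ind t j * max (w t j) 0 :=
        Finset.sum_nonneg fun j _ =>
          mul_nonneg (mul_nonneg (hπ0 j) (hInd0 t j)) (le_max_right _ _)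
      have hD0 : ∑ j, π j * Ind t j * max (w t j) 0 = 0 :=
        le_antisymm (le_of_not_gt hD) hDnn
      have hzero : ∀ i, π i * Ind t i * max (w t i) 0 = 0 := by
        intro i
        have := (Finset.sum_eq_zero_iff_of_nonneg fun j _ =>
          mul_nonneg (mul_nonneg (hπ0 j) (hInd0 t j)) (le_max_right _ _)).1 hD0
        exact this i (Finset.mem_univ i)
      refine Finset.sum_nonpos fun i _ => ?_
      rw [hz, hg]
      by_cases hwi : 0 < w t i
      · rw [if_pos hwi]
        have hmax : max (w t i) 0 = w t i := max_eq_left hwi.le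
        have hπI : π i * Ind t i = 0 := by
          have := hzero i
          rw [hmax] at this
          rcases mul_eq_zero.1 this with h' | h'
          · exact h'
          · exact absurd h' hwi.ne'
        calc π i * (Ind t i * (h t - ℓ t i) * w t i)
            = (π i * Ind t i) * ((h t - ℓ t i) * w t i) := by ring
          _ = 0 := by rw [hπI]; ring
          _ ≤ 0 := le_refl 0
      · rw [if_neg hwi]
        have e : π i * (Ind t i * max (h t - ℓ t i) 0 * w t i)
            = (π i * Ind t i * max (h t - ℓ t i) 0) * w t i := by ring
        rw [e]
        exact mul_nonpos_of_nonneg_of_nonpos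
          (mul_nonneg (mul_nonneg (hπ0 i) (hInd0 t i)) (le_max_right _ _))
          (le_of_not_gt hwi)
  -- per-expert wealth lower bound
  have wealth : ∀ i, Real.exp ((∑ t ∈ Finset.Icc 1 T, z t i) ^ 2 /
        (2 * (1 + Zbar T i)) - Real.log (1 + Zbar T i) / 2)
      ≤ 1 + ∑ t ∈ Finset.Icc 1 T, z t i * w t i := by
    intro i
    have hw' : ∀ t, 1 ≤ t → w t i =
        Real.tanh ((∑ s ∈ Finset.Icc 1 (t - 1), z s i) /
            (2 + ∑ s ∈ Finset.Icc 1 (t - 1), |z s i|)) *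
          (1 + ∑ s ∈ Finset.Icc 1 (t - 1), z s i * w s i) := by
      intro t _
      rw [hw t i, hZbar]
      congr 1
      rw [← sigmoid_eq_tanh]
      rw [mul_div_assoc]
    have := wealth_lb (fun s => z s i) (fun s => w s i) (fun s => habs s i) hw' T
    rw [hZbar]
    exact this
  -- total wealth is at most 1
  have total : ∑ i, π i * (1 + ∑ t ∈ Finset.Icc 1 T, z t i * w t i) ≤ 1 := by
    calc ∑ i, π i * (1 + ∑ t ∈ Finset.Icc 1 T, z t i * w t i)
        = ∑ i, (π i + ∑ t ∈ Finset.Icc 1 T, π i * (z t i * w t i)) :=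
          Finset.sum_congr rfl fun i _ => by rw [mul_add, mul_one, Finset.mul_sum]
      _ = (∑ i, π i) + ∑ i, ∑ t ∈ Finset.Icc 1 T, π i * (z t i * w t i) :=
          Finset.sum_add_distrib
      _ = 1 + ∑ t ∈ Finset.Icc 1 T, ∑ i, π i * (z t i * w t i) := by
          rw [hπ1, Finset.sum_comm]
      _ ≤ 1 + 0 := by
          have hnp := Finset.sum_nonpos
            (fun t (_ : t ∈ Finset.Icc 1 T) => roundB t)
          linarith
      _ = 1 := add_zero 1
  -- regret is bounded by the weighted coin sums
  have regretA : ∑ t ∈ Finset.Icc 1 T, ∑ i, Ind t i * u i * (h t - ℓ t i)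
      ≤ ∑ i, u i * ∑ t ∈ Finset.Icc 1 T, z t i := by
    have hpt : ∀ t i, Ind t i * u i * (h t - ℓ t i) ≤ u i * z t i := by
      intro t i
      rw [hz]
      rcases hInd t i with h' | h'
      · rw [h']; simp
      · rw [h', one_mul, one_mul]
        have hge : h t - ℓ t i ≤ g t i := by
          rw [hg]
          split_ifs
          · exact le_refl _
          · exact le_max_left _ _
        exact mul_le_mul_of_nonneg_left hge (hu0 i)
    calc ∑ t ∈ Finset.Icc 1 T, ∑ i, Ind t i * u i * (h t - ℓ t i)
        ≤ ∑ t ∈ Finset.Icc 1 T, ∑ i, u i * z t i :=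
          Finset.sum_le_sum fun t _ => Finset.sum_le_sum fun i _ => hpt t i
      _ = ∑ i, u i * ∑ t ∈ Finset.Icc 1 T, z t i := by
          rw [Finset.sum_comm]
          exact Finset.sum_congr rfl fun i _ => (Finset.mul_sum _ _ _).symm
  refine le_trans regretA ?_
  exact final_combine u π (fun i => ∑ t ∈ Finset.Icc 1 T, z t i)
    (fun i => Zbar T i) (fun i => 1 + ∑ t ∈ Finset.Icc 1 T, z t i * w t i)
    hu0 hu1 hsupp hπ0
    (fun i => by rw [hZbar]; exact Finset.sum_nonneg fun s _ => abs_nonneg _)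
    (fun i => wealth i) total
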